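/- Let W be the Weyl group of a symmetrizable generalized Cartan matrix C, acting on ℤⁿ via the simple reflections s_i(e_j) = e_j − a_{ij} e_i (and s_i(e_i) = −e_i). If the orbit of every element of ℤⁿ under W is finite and W itself is finite, then C is of finite type. Conversely, if C is of finite type then W is finite. -/

import Mathlib

/-- The matrix of the simple reflection `s_i` of a generalized Cartan matrix `a`. -/
def cartanRefl {n : ℕ} (a : Fin n → Fin n → ℤ) (i : Fin n) :
    Matrix (Fin n) (Fin n) ℤ :=
  Matrix.of fun l j => (if l = j then 1 else 0) - (if l = i then a i j else 0)

/-- The Weyl group of `a`, realized as the subgroup of `GL_n(ℤ)` generated by the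
simple reflections. -/
def weylGroup {n : ℕ} (a : Fin n → Fin n → ℤ) :
    Subgroup (Matrix.GeneralLinearGroup (Fin n) ℤ) :=
  Subgroup.closure {g | ∃ i, (g : Matrix (Fin n) (Fin n) ℤ) = cartanRefl a i}

/-- The root system of `a`: the orbit of the simple roots (standard basis vectors)
under the Weyl group. -/
def rootSys {n : ℕ} (a : Fin n → Fin n → ℤ) : Set (Fin n → ℤ) :=
  {v | ∃ w ∈ weylGroup a, ∃ i : Fin n,
    v = (w : Matrix (Fin n) (Fin n) ℤ).mulVec (Pi.single i 1)}


set_option linter.unusedSectionVars false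
set_option linter.unusedVariables false

open Matrix

section Aux
variable {n : ℕ} {K : Type*} [Field K] [CharZero K]

lemma entry_eq_dot (X : Matrix (Fin n) (Fin n) K) (k l : Fin n) :
    X k l = (Pi.single k 1) ⬝ᵥ X *ᵥ (Pi.single l 1) := by
  simp [Matrix.mulVec_single, single_dotProduct]

lemma refl_mulVec (a : Fin n → Fin n → ℤ) (i : Fin n) (x : Fin n → K) :
    ((cartanRefl a i).map ((↑) : ℤ → K)) *ᵥ x
      = x - (∑ j, (a i j : K) * x j) • (Pi.single i 1 : Fin n → K) := by
  funext l
  simp only [Matrix.mulVec, dotProduct, Matrix.map_apply, cartanRefl, Matrix.of_apply,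
    Int.cast_sub, Pi.sub_apply, Pi.smul_apply, Pi.single_apply, smul_eq_mul]
  push_cast
  simp only [sub_mul, Finset.sum_sub_distrib]
  congr 1
  · simp [ite_mul]
  · by_cases h : l = i <;> simp [h, ite_mul, Finset.mul_sum, mul_comm]

lemma bform_inv (a : Fin n → Fin n → ℤ) (hdiag : ∀ i, a i i = 2) (d' : Fin n → K)
    (hsym' : ∀ i j, d' i * (a i j : K) = d' j * (a j i : K)) (i : Fin n) (x y : Fin n → K) :
    (((cartanRefl a i).map ((↑) : ℤ → K)) *ᵥ x) ⬝ᵥ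
      (Matrix.of fun k l => d' k * (a k l : K)) *ᵥ (((cartanRefl a i).map ((↑) : ℤ → K)) *ᵥ y)
      = x ⬝ᵥ (Matrix.of fun k l => d' k * (a k l : K)) *ᵥ y := by
  set B : Matrix (Fin n) (Fin n) K := Matrix.of fun k l => d' k * (a k l : K) with hB
  have h1 : ∀ z : Fin n → K,
      z ⬝ᵥ B *ᵥ (Pi.single i 1 : Fin n → K) = d' i * ∑ j, (a i j : K) * z j := by
    intro z
    rw [Matrix.mulVec_single_one]
    simp only [dotProduct, hB, Matrix.col_apply, Matrix.of_apply, mul_one, Finset.mul_sum]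
    exact Finset.sum_congr rfl fun k _ => by rw [hsym' k i]; ring
  have h2 : ∀ z : Fin n → K,
      (Pi.single i 1 : Fin n → K) ⬝ᵥ B *ᵥ z = d' i * ∑ j, (a i j : K) * z j := by
    intro z
    rw [single_dotProduct, one_mul]
    simp only [Matrix.mulVec, dotProduct, hB, Matrix.of_apply, Finset.mul_sum]
    exact Finset.sum_congr rfl fun k _ => by ring
  have h3 : (Pi.single i 1 : Fin n → K) ⬝ᵥ B *ᵥ (Pi.single i 1 : Fin n → K) = d' i * 2 := by
    rw [h1]
    simp [Pi.single_apply, hdiag i]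
  rw [refl_mulVec, refl_mulVec]
  simp only [Matrix.mulVec_sub, Matrix.mulVec_smul, sub_dotProduct,
    dotProduct_sub, smul_dotProduct, dotProduct_smul, smul_eq_mul]
  rw [h1 x, h2 y, h3]
  ring

lemma refl_mat_inv (a : Fin n → Fin n → ℤ) (hdiag : ∀ i, a i i = 2) (d' : Fin n → K)
    (hsym' : ∀ i j, d' i * (a i j : K) = d' j * (a j i : K)) (i : Fin n) :
    ((cartanRefl a i).map ((↑) : ℤ → K))ᵀ * (Matrix.of fun k l => d' k * (a k l : K)) *
      ((cartanRefl a i).map ((↑) : ℤ → K)) = Matrix.of fun k l => d' k * (a k l : K) := by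
  set S := (cartanRefl a i).map ((↑) : ℤ → K)
  set B : Matrix (Fin n) (Fin n) K := Matrix.of fun k l => d' k * (a k l : K)
  ext k l
  rw [entry_eq_dot (Sᵀ * B * S) k l, entry_eq_dot B k l, mul_assoc, ← Matrix.mulVec_mulVec,
    ← Matrix.mulVec_mulVec, Matrix.dotProduct_mulVec, Matrix.vecMul_transpose]
  exact bform_inv a hdiag d' hsym' i _ _

lemma mapc_mul (M N : Matrix (Fin n) (Fin n) ℤ) :
    (M * N).map ((↑) : ℤ → K) = M.map ((↑) : ℤ → K) * N.map ((↑) : ℤ → K) := by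
  simpa using Matrix.map_mul (L := M) (M := N) (f := Int.castRingHom K)

lemma weyl_inv_form (a : Fin n → Fin n → ℤ) (hdiag : ∀ i, a i i = 2) (d' : Fin n → K)
    (hsym' : ∀ i j, d' i * (a i j : K) = d' j * (a j i : K))
    {g : Matrix.GeneralLinearGroup (Fin n) ℤ} (hg : g ∈ weylGroup a) :
    ((g : Matrix (Fin n) (Fin n) ℤ).map ((↑) : ℤ → K))ᵀ *
      (Matrix.of fun k l => d' k * (a k l : K)) *
      ((g : Matrix (Fin n) (Fin n) ℤ).map ((↑) : ℤ → K))
      = Matrix.of fun k l => d' k * (a k l : K) := by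
  set B : Matrix (Fin n) (Fin n) K := Matrix.of fun k l => d' k * (a k l : K)
  induction hg using Subgroup.closure_induction with
  | mem x hx =>
    obtain ⟨i, hi⟩ := hx
    rw [hi]
    exact refl_mat_inv a hdiag d' hsym' i
  | one => simp
  | mul x y hx hy px py =>
    rw [Units.val_mul, mapc_mul]
    set X := ((x : Matrix (Fin n) (Fin n) ℤ)).map ((↑) : ℤ → K)
    set Y := ((y : Matrix (Fin n) (Fin n) ℤ)).map ((↑) : ℤ → K)
    calc (X * Y)ᵀ * B * (X * Y) = Yᵀ * (Xᵀ * B * X) * Y := by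
          rw [Matrix.transpose_mul]; simp only [mul_assoc]
      _ = B := by rw [px, py]
  | inv x hx px =>
    set X := ((x : Matrix (Fin n) (Fin n) ℤ)).map ((↑) : ℤ → K) with hXdef
    set X' := (((x⁻¹ : _) : Matrix (Fin n) (Fin n) ℤ)).map ((↑) : ℤ → K) with hX'def
    have hXX' : X * X' = 1 := by
      rw [hXdef, hX'def, ← mapc_mul, ← Units.val_mul, mul_inv_cancel]
      simp
    calc X'ᵀ * B * X' = X'ᵀ * (Xᵀ * B * X) * X' := by rw [px]
      _ = (X * X')ᵀ * B * (X * X') := by rw [Matrix.transpose_mul]; simp only [mul_assoc]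
      _ = B := by rw [hXX']; simp

lemma dot_of_mat_inv {M B : Matrix (Fin n) (Fin n) K} (h : Mᵀ * B * M = B) (x y : Fin n → K) :
    (M *ᵥ x) ⬝ᵥ B *ᵥ (M *ᵥ y) = x ⬝ᵥ B *ᵥ y := by
  conv_rhs => rw [← h, mul_assoc, ← Matrix.mulVec_mulVec, ← Matrix.mulVec_mulVec]
  rw [Matrix.dotProduct_mulVec x Mᵀ, Matrix.vecMul_transpose]

lemma dsum_eq_dot (X : Matrix (Fin n) (Fin n) K) (v : Fin n → K) :
    ∑ i, ∑ j, X i j * v i * v j = v ⬝ᵥ X *ᵥ v := by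
  simp only [dotProduct, Matrix.mulVec, Finset.mul_sum]
  exact Finset.sum_congr rfl fun i _ => Finset.sum_congr rfl fun j _ => by ring

end Aux

section CS
variable {n : ℕ}

lemma cs_ineq (B : Matrix (Fin n) (Fin n) ℚ)
    (hsymB : ∀ x y : Fin n → ℚ, x ⬝ᵥ B *ᵥ y = y ⬝ᵥ B *ᵥ x)
    (hnn : ∀ v : Fin n → ℚ, 0 ≤ v ⬝ᵥ B *ᵥ v) (x y : Fin n → ℚ) :
    (x ⬝ᵥ B *ᵥ y) ^ 2 ≤ (x ⬝ᵥ B *ᵥ x) * (y ⬝ᵥ B *ᵥ y) := by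
  by_cases hyy : y ⬝ᵥ B *ᵥ y = 0
  · -- show x ⬝ᵥ B *ᵥ y = 0
    have hz : x ⬝ᵥ B *ᵥ y = 0 := by
      by_contra hxy
      have h := hnn ((2 * (x ⬝ᵥ B *ᵥ y)) • x - (x ⬝ᵥ B *ᵥ x + 1) • y)
      simp only [Matrix.mulVec_sub, Matrix.mulVec_smul, sub_dotProduct,
        dotProduct_sub, smul_dotProduct, dotProduct_smul,
        smul_eq_mul] at h
      rw [hsymB y x, hyy] at h
      have hc2 : 0 < (x ⬝ᵥ B *ᵥ y) ^ 2 :=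
        lt_of_le_of_ne (sq_nonneg _) (Ne.symm (pow_ne_zero 2 hxy))
      nlinarith [h, hc2]
    rw [hz, hyy]
    simp [pow_two]
  · have h := hnn ((y ⬝ᵥ B *ᵥ y) • x - (x ⬝ᵥ B *ᵥ y) • y)
    simp only [Matrix.mulVec_sub, Matrix.mulVec_smul, sub_dotProduct,
      dotProduct_sub, smul_dotProduct, dotProduct_smul,
      smul_eq_mul] at h
    rw [hsymB y x] at h
    have hy' : 0 < y ⬝ᵥ B *ᵥ y := lt_of_le_of_ne (hnn y) (Ne.symm hyy)
    nlinarith [h, hy', mul_pos hy' hy']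

end CS

section Dir2
variable {n : ℕ}

lemma dir2 (a : Fin n → Fin n → ℤ) (hdiag : ∀ i, a i i = 2)
    (d : Fin n → ℚ) (hdpos : ∀ i, 0 < d i)
    (hsym : ∀ i j, d i * (a i j : ℚ) = d j * (a j i : ℚ))
    (hpos : ∀ v : Fin n → ℚ, v ≠ 0 → 0 < ∑ i, ∑ j, d i * (a i j : ℚ) * v i * v j) :
    Set.Finite (weylGroup a : Set (Matrix.GeneralLinearGroup (Fin n) ℤ)) := by
  classical
  set B : Matrix (Fin n) (Fin n) ℚ := Matrix.of fun k l => d k * (a k l : ℚ) with hBdef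
  have hposB : ∀ v : Fin n → ℚ, v ≠ 0 → 0 < v ⬝ᵥ B *ᵥ v := by
    intro v hv
    rw [← dsum_eq_dot]
    exact hpos v hv
  have hnn : ∀ v : Fin n → ℚ, 0 ≤ v ⬝ᵥ B *ᵥ v := by
    intro v
    by_cases hv : v = 0
    · simp [hv]
    · exact (hposB v hv).le
  have hsymB : ∀ x y : Fin n → ℚ, x ⬝ᵥ B *ᵥ y = y ⬝ᵥ B *ᵥ x := by
    intro x y
    simp only [dotProduct, Matrix.mulVec, Finset.mul_sum]
    rw [Finset.sum_comm]
    refine Finset.sum_congr rfl fun l _ => Finset.sum_congr rfl fun k _ => ?_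
    simp only [hBdef, Matrix.of_apply, dotProduct]
    rw [hsym k l]
    ring
  -- determinant nonzero
  have hdet : IsUnit B.det := by
    rw [isUnit_iff_ne_zero]
    intro h0
    obtain ⟨v, hv, hv0⟩ := (Matrix.exists_mulVec_eq_zero_iff).mpr h0
    have := hposB v hv
    rw [hv0] at this
    simp at this
  have hBiB : B⁻¹ * B = 1 := Matrix.nonsing_inv_mul B hdet
  set r : ℚ := ∑ k, B k k with hrdef
  have hdiagpos : ∀ i, 0 < B i i := by
    intro i
    rw [entry_eq_dot B i i]
    refine hposB _ ?_
    intro h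
    exact (one_ne_zero : (1 : ℚ) ≠ 0) (by simpa using congrFun h i)
  have hr0 : 0 ≤ r := Finset.sum_nonneg fun k _ => (hdiagpos k).le
  have hBr : ∀ i, B i i ≤ r := fun i =>
    Finset.single_le_sum (fun k _ => (hdiagpos k).le) (Finset.mem_univ i)
  set K : ℚ := (∑ i, ∑ k, |B⁻¹ i k|) * r with hKdef
  set C : ℤ := ⌈K⌉ with hCdef
  -- entry bound for Weyl group elements
  have hbound : ∀ g ∈ weylGroup a, ∀ i j, |(g : Matrix (Fin n) (Fin n) ℤ) i j| ≤ C := by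
    intro g hg i j
    set M : Matrix (Fin n) (Fin n) ℤ := (g : Matrix (Fin n) (Fin n) ℤ) with hMdef
    set Mq : Matrix (Fin n) (Fin n) ℚ := M.map ((↑) : ℤ → ℚ) with hMqdef
    have hinv : Mqᵀ * B * Mq = B := weyl_inv_form a hdiag d hsym hg
    set N : Matrix (Fin n) (Fin n) ℚ := B * Mq with hNdef
    have hNsq : ∀ k l, (N k l) ^ 2 ≤ r * r := by
      intro k l
      have h1 : N k l = (Pi.single k 1) ⬝ᵥ B *ᵥ (Mq *ᵥ (Pi.single l 1)) := by
        rw [entry_eq_dot N k l, hNdef, ← Matrix.mulVec_mulVec]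
      have hcs := cs_ineq B hsymB hnn (Pi.single k 1) (Mq *ᵥ (Pi.single l 1))
      have h2 : (Pi.single k 1 : Fin n → ℚ) ⬝ᵥ B *ᵥ (Pi.single k 1 : Fin n → ℚ) = B k k :=
        (entry_eq_dot B k k).symm
      have h3 : (Mq *ᵥ (Pi.single l 1)) ⬝ᵥ B *ᵥ (Mq *ᵥ (Pi.single l 1)) = B l l := by
        rw [dot_of_mat_inv hinv, ← entry_eq_dot]
      rw [h1]
      calc ((Pi.single k 1) ⬝ᵥ B *ᵥ (Mq *ᵥ (Pi.single l 1))) ^ 2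
          ≤ B k k * B l l := by rw [← h2, ← h3]; exact hcs
        _ ≤ r * r := mul_le_mul (hBr k) (hBr l) (hdiagpos l).le hr0
    have hNabs : ∀ k l, |N k l| ≤ r := by
      intro k l
      have h := hNsq k l
      rw [abs_le]
      constructor <;> nlinarith [h, hr0]
    have hMqN : Mq = B⁻¹ * N := by
      rw [hNdef, ← mul_assoc, hBiB, one_mul]
    have hMqbound : |Mq i j| ≤ K := by
      calc |Mq i j| = |∑ k, B⁻¹ i k * N k j| := by rw [hMqN, Matrix.mul_apply]
        _ ≤ ∑ k, |B⁻¹ i k * N k j| := Finset.abs_sum_le_sum_abs _ _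
        _ ≤ ∑ k, |B⁻¹ i k| * r := by
            refine Finset.sum_le_sum fun k _ => ?_
            rw [abs_mul]
            exact mul_le_mul_of_nonneg_left (hNabs k j) (abs_nonneg _)
        _ = (∑ k, |B⁻¹ i k|) * r := by rw [Finset.sum_mul]
        _ ≤ K := by
            refine mul_le_mul_of_nonneg_right ?_ hr0
            exact Finset.single_le_sum
              (f := fun i => ∑ k, |B⁻¹ i k|)
              (fun i _ => Finset.sum_nonneg fun k _ => abs_nonneg _) (Finset.mem_univ i)
    have : ((|M i j| : ℤ) : ℚ) ≤ (C : ℚ) := by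
      rw [Int.cast_abs]
      have : |(M i j : ℚ)| ≤ K := by
        simpa [hMqdef, Matrix.map_apply] using hMqbound
      exact this.trans (Int.le_ceil K)
    exact_mod_cast this
  -- conclude finiteness
  have hfin1 : Set.Finite {M : Matrix (Fin n) (Fin n) ℤ | ∀ i j, |M i j| ≤ C} := by
    refine Set.Finite.subset
      (Set.Finite.pi fun i : Fin n => Set.Finite.pi fun j : Fin n => Set.finite_Icc (-C) C) ?_
    intro M hM
    rw [Set.mem_univ_pi]
    intro i
    rw [Set.mem_univ_pi]
    intro j
    rw [Set.mem_Icc, ← abs_le]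
    exact hM i j
  refine Set.Finite.subset
    (Set.Finite.preimage (f := fun u : Matrix.GeneralLinearGroup (Fin n) ℤ =>
      (u : Matrix (Fin n) (Fin n) ℤ)) (Set.injOn_of_injective Units.val_injective) hfin1) ?_
  intro g hg
  exact hbound g hg

end Dir2

section Dir1
variable {n : ℕ}

lemma sum_mulVec' {ι : Type*} (s : Finset ι) (M : ι → Matrix (Fin n) (Fin n) ℝ)
    (v : Fin n → ℝ) : (∑ w ∈ s, M w) *ᵥ v = ∑ w ∈ s, M w *ᵥ v := by
  funext l
  simp only [Matrix.mulVec, dotProduct, Finset.sum_apply, Matrix.sum_apply,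
    Finset.sum_mul]
  exact Finset.sum_comm

lemma dot_sum' {ι : Type*} (s : Finset ι) (z : ι → (Fin n → ℝ)) (v : Fin n → ℝ) :
    v ⬝ᵥ (∑ w ∈ s, z w) = ∑ w ∈ s, v ⬝ᵥ z w := by
  simp only [dotProduct, Finset.sum_apply, Finset.mul_sum]
  exact Finset.sum_comm

lemma refl_sq (a : Fin n → Fin n → ℤ) (hdiag : ∀ i, a i i = 2) (i : Fin n) :
    cartanRefl a i * cartanRefl a i = 1 := by
  ext k l
  simp only [Matrix.mul_apply, cartanRefl, Matrix.of_apply, sub_mul, mul_sub,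
    Finset.sum_sub_distrib, ite_mul, mul_ite, one_mul, mul_one, zero_mul, mul_zero,
    Finset.sum_ite_eq, Finset.sum_ite_eq', Finset.mem_univ, if_true, Matrix.one_apply]
  by_cases hk : k = i <;> by_cases hkl : k = l <;>
    simp [hk, hkl, hdiag, mul_comm] <;> ring_nf <;> omega

lemma dir1 (a : Fin n → Fin n → ℤ) (hdiag : ∀ i, a i i = 2)
    (d : Fin n → ℚ) (hdpos : ∀ i, 0 < d i)
    (hsym : ∀ i j, d i * (a i j : ℚ) = d j * (a j i : ℚ))
    (hfin : Set.Finite (weylGroup a : Set (Matrix.GeneralLinearGroup (Fin n) ℤ))) :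
    ∀ v : Fin n → ℚ, v ≠ 0 → 0 < ∑ i, ∑ j, d i * (a i j : ℚ) * v i * v j := by
  classical
  set F : Finset (Matrix.GeneralLinearGroup (Fin n) ℤ) := hfin.toFinset with hFdef
  set mR : Matrix.GeneralLinearGroup (Fin n) ℤ → Matrix (Fin n) (Fin n) ℝ :=
    fun w => ((w : Matrix (Fin n) (Fin n) ℤ)).map ((↑) : ℤ → ℝ) with hmRdef
  set P : Matrix (Fin n) (Fin n) ℝ := ∑ w ∈ F, (mR w)ᵀ * mR w with hPdef
  have hmR_mul : ∀ x y, mR (x * y) = mR x * mR y := by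
    intro x y
    rw [hmRdef]
    simp only [Units.val_mul]
    exact mapc_mul _ _
  have hmR_one : mR 1 = 1 := by
    rw [hmRdef]
    simp only [Units.val_one]
    exact Matrix.map_one _ Int.cast_zero Int.cast_one
  have h1F : (1 : Matrix.GeneralLinearGroup (Fin n) ℤ) ∈ F :=
    hfin.mem_toFinset.mpr (one_mem _)
  -- quadratic form of P as a sum of squares
  have hPdot : ∀ u : Fin n → ℝ,
      u ⬝ᵥ P *ᵥ u = ∑ w ∈ F, (mR w *ᵥ u) ⬝ᵥ (mR w *ᵥ u) := by
    intro u
    rw [hPdef, sum_mulVec', dot_sum']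
    refine Finset.sum_congr rfl fun w _ => ?_
    rw [← Matrix.mulVec_mulVec, Matrix.dotProduct_mulVec u (mR w)ᵀ, Matrix.vecMul_transpose]
  have hPpos : ∀ u : Fin n → ℝ, u ≠ 0 → 0 < u ⬝ᵥ P *ᵥ u := by
    intro u hu
    rw [hPdot]
    obtain ⟨k, hk⟩ := Function.ne_iff.mp hu
    refine lt_of_lt_of_le ?_ (Finset.single_le_sum (f := fun w => (mR w *ᵥ u) ⬝ᵥ (mR w *ᵥ u))
      (fun w _ => Finset.sum_nonneg fun i _ => mul_self_nonneg _) h1F)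
    show 0 < (mR 1 *ᵥ u) ⬝ᵥ (mR 1 *ᵥ u)
    rw [hmR_one, Matrix.one_mulVec]
    exact Finset.sum_pos' (fun i _ => mul_self_nonneg _)
      ⟨k, Finset.mem_univ k, mul_self_pos.mpr (by simpa using hk)⟩
  -- invariance of P
  have hPinv : ∀ g ∈ weylGroup a, (mR g)ᵀ * P * (mR g) = P := by
    intro g hg
    have expand : (mR g)ᵀ * P * (mR g) = ∑ w ∈ F, (mR (w * g))ᵀ * mR (w * g) := by
      rw [hPdef, Finset.mul_sum, Finset.sum_mul]
      refine Finset.sum_congr rfl fun w _ => ?_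
      rw [hmR_mul, Matrix.transpose_mul]
      simp only [mul_assoc]
    rw [expand, hPdef]
    refine Finset.sum_nbij' (fun w => w * g) (fun w => w * g⁻¹) ?_ ?_ ?_ ?_ ?_
    · intro w hw
      exact hfin.mem_toFinset.mpr (mul_mem (hfin.mem_toFinset.mp hw) hg)
    · intro w hw
      exact hfin.mem_toFinset.mpr (mul_mem (hfin.mem_toFinset.mp hw) (inv_mem hg))
    · intro w _; group
    · intro w _; group
    · intro w _; rfl
  -- symmetry of P
  have hPsym : ∀ i j, P i j = P j i := by
    have hT : Pᵀ = P := by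
      rw [hPdef, Matrix.transpose_sum]
      refine Finset.sum_congr rfl fun w _ => ?_
      rw [Matrix.transpose_mul, Matrix.transpose_transpose]
    intro i j
    conv_lhs => rw [← hT]
    rfl
  have hsingle_ne : ∀ i : Fin n, (Pi.single i 1 : Fin n → ℝ) ≠ 0 := by
    intro i h
    exact (one_ne_zero : (1 : ℝ) ≠ 0) (by simpa using congrFun h i)
  have hPii : ∀ i, 0 < P i i := by
    intro i
    rw [entry_eq_dot P i i]
    exact hPpos _ (hsingle_ne i)
  -- the key identity
  have key : ∀ i j, (a i j : ℝ) * P i i = 2 * P i j := by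
    intro i j
    set gi : Matrix.GeneralLinearGroup (Fin n) ℤ :=
      ⟨cartanRefl a i, cartanRefl a i, refl_sq a hdiag i, refl_sq a hdiag i⟩ with hgidef
    have hgiW : gi ∈ weylGroup a := Subgroup.subset_closure ⟨i, rfl⟩
    have hinv : (mR gi)ᵀ * P * (mR gi) = P := hPinv gi hgiW
    have hdot := dot_of_mat_inv hinv (Pi.single i 1) (Pi.single j 1)
    have hmRgi : mR gi = (cartanRefl a i).map ((↑) : ℤ → ℝ) := rfl
    rw [hmRgi, refl_mulVec, refl_mulVec] at hdot
    have hsi : ∑ l, (a i l : ℝ) * (Pi.single i 1 : Fin n → ℝ) l = 2 := by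
      simp only [Pi.single_apply, mul_ite, mul_one, mul_zero, Finset.sum_ite_eq',
        Finset.mem_univ, if_true]
      exact_mod_cast hdiag i
    have hsj : ∑ l, (a i l : ℝ) * (Pi.single j 1 : Fin n → ℝ) l = (a i j : ℝ) := by
      simp only [Pi.single_apply, mul_ite, mul_one, mul_zero, Finset.sum_ite_eq',
        Finset.mem_univ, if_true]
    rw [hsi, hsj] at hdot
    simp only [Matrix.mulVec_sub, Matrix.mulVec_smul, sub_dotProduct,
      dotProduct_sub, smul_dotProduct, dotProduct_smul,
      smul_eq_mul] at hdot
    rw [← entry_eq_dot P i j, ← entry_eq_dot P i i] at hdot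
    linarith [hdot]
  -- build the scaling factors
  set q : Fin n → ℝ := fun i => 2 * (d i : ℝ) / P i i with hqdef
  have hq : ∀ i, 0 < q i := by
    intro i
    have h1 : (0 : ℝ) < (d i : ℝ) := by exact_mod_cast hdpos i
    have h2 := hPii i
    rw [hqdef]
    positivity
  have hBq : ∀ i j, (d i : ℝ) * (a i j : ℝ) = q i * P i j := by
    intro i j
    rw [hqdef]
    show (d i : ℝ) * (a i j : ℝ) = 2 * (d i : ℝ) / P i i * P i j
    rw [div_mul_eq_mul_div, eq_div_iff (hPii i).ne']
    linear_combination (d i : ℝ) * key i j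
  have hqq : ∀ i j, P i j ≠ 0 → q i = q j := by
    intro i j hP
    have h2 : (d i : ℝ) * (a i j : ℝ) = (d j : ℝ) * (a j i : ℝ) := by
      exact_mod_cast hsym i j
    have h1 : q i * P i j = q j * P i j := by
      rw [← hBq i j, h2, hBq j i, hPsym j i]
    exact mul_right_cancel₀ hP h1
  intro v hv
  obtain ⟨k, hk⟩ := Function.ne_iff.mp hv
  have hvk : v k ≠ 0 := by simpa using hk
  set u : Fin n → ℝ := fun i => Real.sqrt (q i) * (v i : ℝ) with hudef
  have hu : u ≠ 0 := by
    intro h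
    have h2 := congrFun h k
    simp only [hudef, Pi.zero_apply] at h2
    rcases mul_eq_zero.mp h2 with h3 | h3
    · exact (Real.sqrt_pos.mpr (hq k)).ne' h3
    · exact hvk (by exact_mod_cast h3)
  have hterm : ∀ i j, (d i : ℝ) * (a i j : ℝ) * (v i : ℝ) * (v j : ℝ)
      = P i j * u i * u j := by
    intro i j
    by_cases hP : P i j = 0
    · rw [hBq i j, hP]; ring
    · have hss : Real.sqrt (q j) * Real.sqrt (q j) = q j := Real.mul_self_sqrt (hq j).le
      rw [hBq i j, hqq i j hP]
      simp only [hudef]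
      rw [hqq i j hP]
      linear_combination (-(P i j * (v i : ℝ) * (v j : ℝ))) * hss
  have hfinal : (0 : ℝ) < ((∑ i, ∑ j, d i * (a i j : ℚ) * v i * v j : ℚ) : ℝ) := by
    have hcast : ((∑ i, ∑ j, d i * (a i j : ℚ) * v i * v j : ℚ) : ℝ)
        = ∑ i, ∑ j, (d i : ℝ) * (a i j : ℝ) * (v i : ℝ) * (v j : ℝ) := by
      push_cast
      rfl
    rw [hcast]
    have : (∑ i, ∑ j, (d i : ℝ) * (a i j : ℝ) * (v i : ℝ) * (v j : ℝ))
        = ∑ i, ∑ j, P i j * u i * u j :=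
      Finset.sum_congr rfl fun i _ => Finset.sum_congr rfl fun j _ => hterm i j
    rw [this, dsum_eq_dot]
    exact hPpos u hu
  exact_mod_cast hfinal

end Dir1

/-- If every Weyl group orbit in `ℤⁿ` is finite and the Weyl group itself is finite,
then the symmetrizable generalized Cartan matrix is of finite type (the symmetrized
bilinear form is positive definite); conversely, finite type implies that the Weyl
group is finite. -/
theorem stmt12 {n : ℕ} (a : Fin n → Fin n → ℤ)
    (hdiag : ∀ i, a i i = 2)
    (hoff : ∀ i j, i ≠ j → a i j ≤ 0)
    (hzero : ∀ i j, a i j = 0 ↔ a j i = 0)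
    (d : Fin n → ℚ) (hdpos : ∀ i, 0 < d i)
    (hsym : ∀ i j, d i * a i j = d j * a j i) :
    ((Set.Finite (weylGroup a : Set (Matrix.GeneralLinearGroup (Fin n) ℤ)) ∧
        ∀ v : Fin n → ℤ, Set.Finite
          {u : Fin n → ℤ | ∃ w ∈ weylGroup a,
            u = (w : Matrix (Fin n) (Fin n) ℤ).mulVec v}) →
      ∀ v : Fin n → ℚ, v ≠ 0 → 0 < ∑ i, ∑ j, d i * (a i j : ℚ) * v i * v j) ∧
    ((∀ v : Fin n → ℚ, v ≠ 0 → 0 < ∑ i, ∑ j, d i * (a i j : ℚ) * v i * v j) →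
      Set.Finite (weylGroup a : Set (Matrix.GeneralLinearGroup (Fin n) ℤ))) := by
  constructor
  · rintro ⟨hfin, -⟩
    exact dir1 a hdiag d hdpos hsym hfin
  · intro hpos
    exact dir2 a hdiag d hdpos hsym hpos
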